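/- Let (X,r) be a solution and k, k' positive integers. Then the k'-cabling of the k-cabled solution coincides with the kk'-cabling of the original solution: (r^{(k)})^{(k')} = r^{(kk')} as maps X × X → X × X. -/
import Mathlib


open Function

variable {X : Type*}

/-- The map `r(x,y) = (σ_x(y), τ_y(x))` built from two families of bijections. -/
def ybR (σ τ : X → Equiv.Perm X) : X × X → X × X :=
  fun p => (σ p.1 p.2, τ p.2 p.1)

/-- Apply a map `X × X → X × X` to the first two coordinates of a triple (`r × id`). -/
def lmap (r : X × X → X × X) : X × X × X → X × X × X :=
  fun p => ((r (p.1, p.2.1)).1, ((r (p.1, p.2.1)).2, p.2.2))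

/-- Apply a map `X × X → X × X` to the last two coordinates of a triple (`id × r`). -/
def rmap (r : X × X → X × X) : X × X × X → X × X × X :=
  fun p => (p.1, r p.2)

/-- A finite non-degenerate involutive set-theoretic solution of the Yang--Baxter
equation on a finite set `X` with `|X| > 1`. -/
structure YBSolution (X : Type*) [Fintype X] where
  σ : X → Equiv.Perm X
  τ : X → Equiv.Perm X
  card_gt_one : 1 < Fintype.card X
  involutive : ∀ p : X × X, ybR σ τ (ybR σ τ p) = p
  braid : lmap (ybR σ τ) ∘ rmap (ybR σ τ) ∘ lmap (ybR σ τ)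
        = rmap (ybR σ τ) ∘ lmap (ybR σ τ) ∘ rmap (ybR σ τ)

namespace YBSolution

variable [Fintype X]

/-- The diagonal map `T(x) = τ_x⁻¹(x)`. -/
def T (S : YBSolution X) (x : X) : X := (S.τ x).symm x

/-- The map `U(x) = σ_x⁻¹(x)`, the inverse of the diagonal map. -/
def U (S : YBSolution X) (x : X) : X := (S.σ x).symm x

/-- The `k`-cabled sigma maps (also denoted `π_k`):
`σ^{(k)}_x = σ_x ∘ σ_{U(x)} ∘ ⋯ ∘ σ_{U^{k-1}(x)}`. -/
def sigmaCab (S : YBSolution X) : ℕ → X → X → X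
  | 0, _ => id
  | k + 1, x => ⇑(S.σ x) ∘ S.sigmaCab k (S.U x)

/-- The composition `τ_{U^{k-1}(y)} ∘ ⋯ ∘ τ_{U(y)} ∘ τ_y`. -/
def tauChain (S : YBSolution X) : ℕ → X → X → X
  | 0, _ => id
  | k + 1, y => S.tauChain k (S.U y) ∘ ⇑(S.τ y)

/-- The `k`-cabled tau maps:
`τ^{(k)}_y = T^{k-1} ∘ τ_{U^{k-1}(y)} ∘ ⋯ ∘ τ_{U(y)} ∘ τ_y ∘ T^{-(k-1)}`,
where `T^{-(k-1)} = U^{k-1}` since `U` is the inverse of `T`. -/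
def tauCab (S : YBSolution X) (k : ℕ) (y : X) : X → X :=
  S.T^[k - 1] ∘ S.tauChain k y ∘ S.U^[k - 1]

/-- The `k`-cabled solution `r^{(k)}(x,y) = (σ^{(k)}_x(y), τ^{(k)}_y(x))`. -/
def rCab (S : YBSolution X) (k : ℕ) : X × X → X × X :=
  fun p => (S.sigmaCab k p.1 p.2, S.tauCab k p.2 p.1)

/-- The permutation group `𝒢(X,r)`, generated by the `σ_x`. -/
def G (S : YBSolution X) : Subgroup (Equiv.Perm X) :=
  Subgroup.closure (Set.range S.σ)

/-- The permutation group `𝒢(X,r^{(k)})` of the `k`-cabled solution,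
generated by the `σ^{(k)}_x`. -/
def Gcab (S : YBSolution X) (k : ℕ) : Subgroup (Equiv.Perm X) :=
  Subgroup.closure {g : Equiv.Perm X | ∃ x : X, ⇑g = S.sigmaCab k x}

/-- The orbit of `x` under the diagonal map `T`. -/
def Torbit (S : YBSolution X) (x : X) : Set X := {y | ∃ n : ℕ, S.T^[n] x = y}

/-- The orbit of `x` under `𝒢(X,r)`. -/
def Gorbit (S : YBSolution X) (x : X) : Set X := {y | ∃ g ∈ S.G, g x = y}

/-- The orbit of `x` under `𝒢(X,r^{(k)})`. -/
def GcabOrbit (S : YBSolution X) (k : ℕ) (x : X) : Set X :=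
  {y | ∃ g ∈ S.Gcab k, g x = y}

/-- A solution is indecomposable when `𝒢(X,r)` acts transitively on `X`. -/
def IsIndecomposable (S : YBSolution X) : Prop := ∀ x y : X, ∃ g ∈ S.G, g x = y

end YBSolution

namespace YBSolution

variable [Fintype X]

lemma inv_fst (S : YBSolution X) (x y : X) :
    S.σ (S.σ x y) (S.τ y x) = x :=
  congrArg Prod.fst (S.involutive (x, y))

lemma sigma_U (S : YBSolution X) (x : X) : S.σ x (S.U x) = x :=
  (S.σ x).apply_symm_apply x

lemma tau_U_self (S : YBSolution X) (x : X) : S.τ (S.U x) x = S.U x := by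
  have h := S.inv_fst x (S.U x)
  rw [S.sigma_U x] at h
  exact (S.σ x).injective (h.trans (S.sigma_U x).symm)

lemma T_U (S : YBSolution X) (x : X) : S.T (S.U x) = x := by
  have h := (S.τ (S.U x)).symm_apply_apply x
  rw [S.tau_U_self x] at h
  exact h

lemma U_T (S : YBSolution X) (x : X) : S.U (S.T x) = x := by
  obtain ⟨z, rfl⟩ := Finite.injective_iff_surjective.mp
    (Function.LeftInverse.injective (g := S.T) S.T_U) x
  rw [S.T_U]

lemma T_U_iter (S : YBSolution X) (n : ℕ) (x : X) : S.T^[n] (S.U^[n] x) = x :=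
  (Function.LeftInverse.iterate S.T_U n) x

lemma U_T_iter (S : YBSolution X) (n : ℕ) (x : X) : S.U^[n] (S.T^[n] x) = x :=
  (Function.LeftInverse.iterate S.U_T n) x

lemma sigmaCab_U (S : YBSolution X) : ∀ (n : ℕ) (x : X), S.sigmaCab n x (S.U^[n] x) = x
  | 0, x => rfl
  | n + 1, x => by
    show S.σ x (S.sigmaCab n (S.U x) (S.U^[n + 1] x)) = x
    rw [Function.iterate_succ_apply, S.sigmaCab_U n (S.U x)]
    exact S.sigma_U x

lemma U_cab (S S' : YBSolution X) (k : ℕ)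
    (hσ : ∀ x : X, ⇑(S'.σ x) = S.sigmaCab k x) (x : X) : S'.U x = S.U^[k] x := by
  have h : S'.σ x (S.U^[k] x) = x := by rw [hσ]; exact S.sigmaCab_U k x
  show (S'.σ x).symm x = S.U^[k] x
  exact (Equiv.symm_apply_eq _).mpr h.symm

lemma sigmaCab_add (S : YBSolution X) :
    ∀ (a : ℕ) (b : ℕ) (x y : X),
      S.sigmaCab (a + b) x y = S.sigmaCab a x (S.sigmaCab b (S.U^[a] x) y)
  | 0, b, x, y => by rw [Nat.zero_add]; rfl
  | a + 1, b, x, y => by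
    rw [show a + 1 + b = (a + b) + 1 by omega]
    show S.σ x (S.sigmaCab (a + b) (S.U x) y) =
      S.σ x (S.sigmaCab a (S.U x) (S.sigmaCab b (S.U^[a + 1] x) y))
    rw [Function.iterate_succ_apply, S.sigmaCab_add a b (S.U x) y]

lemma tauChain_add (S : YBSolution X) :
    ∀ (a : ℕ) (b : ℕ) (y x : X),
      S.tauChain (a + b) y x = S.tauChain b (S.U^[a] y) (S.tauChain a y x)
  | 0, b, y, x => by rw [Nat.zero_add]; rfl
  | a + 1, b, y, x => by
    rw [show a + 1 + b = (a + b) + 1 by omega]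
    show S.tauChain (a + b) (S.U y) (S.τ y x) =
      S.tauChain b (S.U^[a + 1] y) (S.tauChain a (S.U y) (S.τ y x))
    rw [Function.iterate_succ_apply, S.tauChain_add a b (S.U y) (S.τ y x)]

lemma tauChain_T (S : YBSolution X) :
    ∀ (n : ℕ) (x : X), S.tauChain n x (S.T x) = S.T (S.U^[n] x)
  | 0, x => rfl
  | n + 1, x => by
    show S.tauChain n (S.U x) (S.τ x (S.T x)) = S.T (S.U^[n + 1] x)
    rw [Function.iterate_succ_apply, ← S.tauChain_T n (S.U x)]
    congr 1
    rw [S.T_U x]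
    exact (S.τ x).apply_symm_apply x

lemma tauCab_T_iter (S : YBSolution X) (j : ℕ) (x : X) :
    S.tauCab (j + 1) x (S.T^[j + 1] x) = x := by
  show S.T^[j + 1 - 1] (S.tauChain (j + 1) x (S.U^[j + 1 - 1] (S.T^[j + 1] x))) = x
  rw [Nat.add_sub_cancel, Function.iterate_succ_apply S.T j x, S.U_T_iter j,
    S.tauChain_T (j + 1) x, ← Function.iterate_succ_apply S.T j]
  exact S.T_U_iter (j + 1) x

lemma T_cab (S S' : YBSolution X) (j : ℕ)
    (hτ : ∀ x : X, ⇑(S'.τ x) = S.tauCab (j + 1) x) (x : X) : S'.T x = S.T^[j + 1] x := by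
  have h : S'.τ x (S.T^[j + 1] x) = x := by rw [hτ]; exact S.tauCab_T_iter j x
  show (S'.τ x).symm x = S.T^[j + 1] x
  exact (Equiv.symm_apply_eq _).mpr h.symm

lemma sigmaCab_cab (S S' : YBSolution X) (k : ℕ)
    (hσ : ∀ x : X, ⇑(S'.σ x) = S.sigmaCab k x) :
    ∀ (m : ℕ) (x y : X), S'.sigmaCab m x y = S.sigmaCab (k * m) x y
  | 0, x, y => rfl
  | m + 1, x, y => by
    show S'.σ x (S'.sigmaCab m (S'.U x) y) = S.sigmaCab (k * (m + 1)) x y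
    rw [S.sigmaCab_cab S' k hσ m (S'.U x) y, S.U_cab S' k hσ x, hσ x,
      show k * (m + 1) = k + k * m by ring, S.sigmaCab_add k (k * m) x y]

lemma tauChain_cab (S S' : YBSolution X) (j : ℕ)
    (hσ : ∀ x : X, ⇑(S'.σ x) = S.sigmaCab (j + 1) x)
    (hτ : ∀ x : X, ⇑(S'.τ x) = S.tauCab (j + 1) x) :
    ∀ (m : ℕ) (y x : X),
      S'.tauChain m y x = S.T^[j] (S.tauChain ((j + 1) * m) y (S.U^[j] x))
  | 0, y, x => by
    show x = S.T^[j] (S.U^[j] x)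
    rw [S.T_U_iter j x]
  | m + 1, y, x => by
    show S'.tauChain m (S'.U y) (S'.τ y x) = _
    rw [S.tauChain_cab S' j hσ hτ m (S'.U y) (S'.τ y x), S.U_cab S' j.succ hσ y, hτ y]
    show S.T^[j] (S.tauChain ((j + 1) * m) (S.U^[j + 1] y)
      (S.U^[j] (S.T^[j + 1 - 1] (S.tauChain (j + 1) y (S.U^[j + 1 - 1] x))))) = _
    rw [Nat.add_sub_cancel, S.U_T_iter j,
      ← S.tauChain_add (j + 1) ((j + 1) * m) y (S.U^[j] x),
      show (j + 1) + (j + 1) * m = (j + 1) * (m + 1) by ring]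

lemma tauCab_cab (S S' : YBSolution X) (j i : ℕ)
    (hσ : ∀ x : X, ⇑(S'.σ x) = S.sigmaCab (j + 1) x)
    (hτ : ∀ x : X, ⇑(S'.τ x) = S.tauCab (j + 1) x) (y x : X) :
    S'.tauCab (i + 1) y x = S.tauCab ((j + 1) * (i + 1)) y x := by
  have hU : S'.U = S.U^[j + 1] := funext (S.U_cab S' (j + 1) hσ)
  have hT : S'.T = S.T^[j + 1] := funext (S.T_cab S' j hτ)
  have harith : (j + 1) * (i + 1) - 1 = (j + 1) * i + j := by
    have : (j + 1) * (i + 1) = ((j + 1) * i + j) + 1 := by ring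
    omega
  show S'.T^[i + 1 - 1] (S'.tauChain (i + 1) y (S'.U^[i + 1 - 1] x)) =
    S.T^[(j + 1) * (i + 1) - 1] (S.tauChain ((j + 1) * (i + 1)) y
      (S.U^[(j + 1) * (i + 1) - 1] x))
  rw [Nat.add_sub_cancel, hU, hT, ← Function.iterate_mul, ← Function.iterate_mul,
    S.tauChain_cab S' j hσ hτ (i + 1) y, harith,
    ← Function.iterate_add_apply S.T ((j + 1) * i) j,
    show S.U^[j] (S.U^[(j + 1) * i] x) = S.U^[(j + 1) * i + j] x by
      rw [← Function.iterate_add_apply S.U j ((j + 1) * i) x]; ring_nf]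

end YBSolution

/-- cabling the `k`-cabled solution by `k'` gives the `kk'`-cabling:
if `S'` is the `k`-cabled solution of `S` (its `σ` and `τ` maps are `σ^{(k)}` and
`τ^{(k)}` of `S`), then `(r^{(k)})^{(k')} = r^{(kk')}`. -/
theorem cabling_iterate [Fintype X] (S S' : YBSolution X) (k k' : ℕ)
    (hk : 0 < k) (hk' : 0 < k')
    (hσ : ∀ x : X, ⇑(S'.σ x) = S.sigmaCab k x)
    (hτ : ∀ x : X, ⇑(S'.τ x) = S.tauCab k x) :
    S'.rCab k' = S.rCab (k * k') := by
  obtain ⟨j, rfl⟩ : ∃ j, k = j + 1 := ⟨k - 1, by omega⟩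
  obtain ⟨i, rfl⟩ : ∃ i, k' = i + 1 := ⟨k' - 1, by omega⟩
  funext p
  show (S'.sigmaCab (i + 1) p.1 p.2, S'.tauCab (i + 1) p.2 p.1) = _
  rw [S.sigmaCab_cab S' (j + 1) hσ (i + 1) p.1 p.2,
    S.tauCab_cab S' j i hσ hτ p.2 p.1]
  rfl
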